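/- Let E be a finite-dimensional real normed vector space and L_d : E × E → ℝ twice continuously differentiable. Suppose q₀*, q₁*, q₂* ∈ E satisfy the discrete Euler–Lagrange equation D₁L_d(q₁*, q₂*) + D₂L_d(q₀*, q₁*) = 0, and suppose the continuous linear map D₁₂L_d(q₁*, q₂*) : E → E*, sending v to the functional w ↦ D²L_d(q₁*, q₂*)((w,0),(0,v)), is bijective. Then there exist open neighborhoods U of (q₀*, q₁*) in E × E and V of q₂* in E, and a continuously differentiable map f : U → E with f(q₀*, q₁*) = q₂*, such that for every (q₀, q₁) ∈ U, f(q₀, q₁) is the unique element q₂ of V satisfying D₁L_d(q₁, q₂) + D₂L_d(q₀, q₁) = 0; hence the discrete Lagrangian flow Υ(q₀, q₁) = (q₁, f(q₀, q₁)) is locally well defined. -/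

import Mathlib

set_option maxHeartbeats 1000000


/-- **Local existence of the discrete Lagrangian flow.**  If the discrete
Euler–Lagrange equation holds at `(q₀*, q₁*, q₂*)` and the mixed second partial
derivative `D₁₂L_d(q₁*, q₂*) : E → E*` is bijective, then there is a locally
well-defined `C¹` map `f` solving the discrete Euler–Lagrange equation,
i.e. the discrete flow `Υ(q₀,q₁) = (q₁, f(q₀,q₁))` is locally well defined. -/
theorem discrete_lagrangian_flow_locally_well_defined
    {E : Type*} [NormedAddCommGroup E] [NormedSpace ℝ E] [FiniteDimensional ℝ E]
    (L : E × E → ℝ) (hL : ContDiff ℝ 2 L)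
    (q₀' q₁' q₂' : E)
    (hDEL : fderiv ℝ (fun x => L (x, q₂')) q₁'
        + fderiv ℝ (fun y => L (q₀', y)) q₁' = 0)
    (hbij : Function.Bijective
        ⇑(((((fderiv ℝ (fderiv ℝ L) (q₁', q₂')).comp
              (ContinuousLinearMap.inl ℝ E E)).flip).comp
              (ContinuousLinearMap.inr ℝ E E)))) :
    ∃ (U : Set (E × E)) (V : Set E) (f : E × E → E),
      IsOpen U ∧ IsOpen V ∧ (q₀', q₁') ∈ U ∧ q₂' ∈ V ∧
      ContDiffOn ℝ 1 f U ∧ f (q₀', q₁') = q₂' ∧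
      ∀ p ∈ U, f p ∈ V ∧
        (fderiv ℝ (fun x => L (x, f p)) p.2 + fderiv ℝ (fun y => L (p.1, y)) p.2 = 0) ∧
        ∀ z ∈ V, fderiv ℝ (fun x => L (x, z)) p.2 + fderiv ℝ (fun y => L (p.1, y)) p.2 = 0
          → z = f p := by
  classical
  set D : E × E → (E × E →L[ℝ] ℝ) := fderiv ℝ L with hDdef
  have hD : ContDiff ℝ 1 D := hL.fderiv_right (by norm_num)
  have hDdiff : Differentiable ℝ D := hD.differentiable (by norm_num)
  have hLdiff : Differentiable ℝ L := hL.differentiable (by norm_num)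
  -- the two partial derivatives
  have hinl : ((ContinuousLinearMap.id ℝ E).prod 0) = ContinuousLinearMap.inl ℝ E E := by
    ext x <;> rfl
  have hinr : ((0 : E →L[ℝ] E).prod (ContinuousLinearMap.id ℝ E)) = ContinuousLinearMap.inr ℝ E E := by
    ext x <;> rfl
  have hpart1 : ∀ q z : E, HasFDerivAt (fun x => L (x, z))
      ((D (q, z)).comp (ContinuousLinearMap.inl ℝ E E)) q := by
    intro q z
    have h := ((hLdiff (q, z)).hasFDerivAt).comp (f := fun x => (x, z)) q
      (HasFDerivAt.prodMk (hasFDerivAt_id q) (hasFDerivAt_const z q))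
    rwa [hinl] at h
  have hpart2 : ∀ q z : E, HasFDerivAt (fun y => L (q, y))
      ((D (q, z)).comp (ContinuousLinearMap.inr ℝ E E)) z := by
    intro q z
    have h := ((hLdiff (q, z)).hasFDerivAt).comp z
      (HasFDerivAt.prodMk (hasFDerivAt_const q z) (hasFDerivAt_id z))
    rwa [hinr] at h
  -- precomposition operators
  set c₁ : (E × E →L[ℝ] ℝ) →L[ℝ] (E →L[ℝ] ℝ) :=
    (ContinuousLinearMap.compL ℝ E (E × E) ℝ).flip (ContinuousLinearMap.inl ℝ E E) with hc₁
  set c₂ : (E × E →L[ℝ] ℝ) →L[ℝ] (E →L[ℝ] ℝ) :=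
    (ContinuousLinearMap.compL ℝ E (E × E) ℝ).flip (ContinuousLinearMap.inr ℝ E E) with hc₂
  have hc₁app : ∀ u : E × E →L[ℝ] ℝ, c₁ u = u.comp (ContinuousLinearMap.inl ℝ E E) := fun _ => rfl
  have hc₂app : ∀ u : E × E →L[ℝ] ℝ, c₂ u = u.comp (ContinuousLinearMap.inr ℝ E E) := fun _ => rfl
  -- the Euler-Lagrange map and the extended map F
  set Φ : (E × E) × E → (E →L[ℝ] ℝ) := fun x => c₁ (D (x.1.2, x.2)) + c₂ (D x.1) with hΦdef
  set F : (E × E) × E → (E × E) × (E →L[ℝ] ℝ) := fun x => (x.1, Φ x) with hFdef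
  set πc : ((E × E) × E) →L[ℝ] (E × E) :=
    ((ContinuousLinearMap.snd ℝ E E).comp (ContinuousLinearMap.fst ℝ (E × E) E)).prod
      (ContinuousLinearMap.snd ℝ (E × E) E) with hπc
  have hπcapp : ∀ x : (E × E) × E, πc x = (x.1.2, x.2) := fun _ => rfl
  have hΦC : ContDiff ℝ 1 Φ := by
    exact (c₁.contDiff.comp (hD.comp πc.contDiff)).add
      (c₂.contDiff.comp (hD.comp (ContinuousLinearMap.fst ℝ (E × E) E).contDiff))
  have hFC : ContDiff ℝ 1 F := contDiff_fst.prodMk hΦC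
  -- the derivative of F at the base point
  set x₀ : (E × E) × E := ((q₀', q₁'), q₂') with hx₀
  set A : (E × E) →L[ℝ] (E × E →L[ℝ] ℝ) := fderiv ℝ D (q₁', q₂') with hA
  set A' : (E × E) →L[ℝ] (E × E →L[ℝ] ℝ) := fderiv ℝ D (q₀', q₁') with hA'
  set B : ((E × E) × E) →L[ℝ] (E →L[ℝ] ℝ) :=
    c₁.comp (A.comp πc) + c₂.comp (A'.comp (ContinuousLinearMap.fst ℝ (E × E) E)) with hB
  set F' : ((E × E) × E) →L[ℝ] ((E × E) × (E →L[ℝ] ℝ)) :=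
    (ContinuousLinearMap.fst ℝ (E × E) E).prod B with hF'def
  have hΦ' : HasFDerivAt Φ B x₀ := by
    have h1 : HasFDerivAt (fun x : (E × E) × E => D (x.1.2, x.2)) (A.comp πc) x₀ :=
      ((hDdiff (q₁', q₂')).hasFDerivAt).comp x₀ πc.hasFDerivAt
    have h1' : HasFDerivAt (fun x : (E × E) × E => c₁ (D (x.1.2, x.2)))
        (c₁.comp (A.comp πc)) x₀ := c₁.hasFDerivAt.comp x₀ h1
    have h2 : HasFDerivAt (fun x : (E × E) × E => D x.1)
        (A'.comp (ContinuousLinearMap.fst ℝ (E × E) E)) x₀ :=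
      ((hDdiff (q₀', q₁')).hasFDerivAt).comp x₀
        (ContinuousLinearMap.fst ℝ (E × E) E).hasFDerivAt
    have h2' : HasFDerivAt (fun x : (E × E) × E => c₂ (D x.1))
        (c₂.comp (A'.comp (ContinuousLinearMap.fst ℝ (E × E) E))) x₀ :=
      c₂.hasFDerivAt.comp x₀ h2
    exact h1'.add h2'
  have hF' : HasFDerivAt F F' x₀ := HasFDerivAt.prodMk hasFDerivAt_fst hΦ'
  -- F at the base point
  have hΦ0 : Φ x₀ = 0 := by
    have e1 : fderiv ℝ (fun x => L (x, q₂')) q₁' = c₁ (D (q₁', q₂')) := by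
      rw [hc₁app]; exact (hpart1 q₁' q₂').fderiv
    have e2 : fderiv ℝ (fun y => L (q₀', y)) q₁' = c₂ (D (q₀', q₁')) := by
      rw [hc₂app]; exact (hpart2 q₀' q₁').fderiv
    calc Φ x₀ = fderiv ℝ (fun x => L (x, q₂')) q₁' + fderiv ℝ (fun y => L (q₀', y)) q₁' := by
          rw [e1, e2]
      _ = 0 := hDEL
  have hFx₀ : F x₀ = ((q₀', q₁'), 0) := by
    show (x₀.1, Φ x₀) = _
    rw [hΦ0]
  -- symmetry of the second derivative
  have hsymm : ∀ v w : E × E, A v w = A w v :=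
    second_derivative_symmetric (f := L) (f' := D)
      (fun y => (hLdiff y).hasFDerivAt) ((hDdiff (q₁', q₂')).hasFDerivAt)
  -- the mixed partial map T is bijective
  set T : E →L[ℝ] (E →L[ℝ] ℝ) := c₁.comp (A.comp (ContinuousLinearMap.inr ℝ E E)) with hT
  have hTbij : Function.Bijective ⇑T := by
    have heq : ⇑T = ⇑(((A.comp (ContinuousLinearMap.inl ℝ E E)).flip).comp
        (ContinuousLinearMap.inr ℝ E E)) := by
      funext v
      ext w
      show (A ((0 : E), v)).comp (ContinuousLinearMap.inl ℝ E E) w = A (w, 0) (0, v)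
      show A ((0 : E), v) (w, (0 : E)) = A (w, 0) (0, v)
      exact hsymm (0, v) (w, 0)
    rw [heq]
    exact hbij
  -- B splits as B (dp, 0) + T dz
  have hBsplit : ∀ y : (E × E) × E, B y = B (y.1, 0) + T y.2 := by
    rintro ⟨dp, dz⟩
    have : ((dp.2 : E), dz) = ((dp.2, (0 : E)) : E × E) + ((0 : E), dz) := by simp
    show c₁ (A (dp.2, dz)) + c₂ (A' dp) = (c₁ (A (dp.2, 0)) + c₂ (A' dp)) + c₁ (A (0, dz))
    rw [this, map_add, map_add]
    abel
  -- F' is bijective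
  have hF'bij : Function.Bijective ⇑F' := by
    constructor
    · rintro ⟨dp, dz⟩ ⟨dp', dz'⟩ h
      have h1 : dp = dp' := congrArg Prod.fst h
      have h2 : B (dp, dz) = B (dp', dz') := congrArg Prod.snd h
      rw [hBsplit ⟨dp, dz⟩, hBsplit ⟨dp', dz'⟩, h1] at h2
      have h3 : T dz = T dz' := by
        have := add_left_cancel h2
        exact this
      have := hTbij.1 h3
      rw [h1, this]
    · rintro ⟨dp, u⟩
      obtain ⟨dz, hdz⟩ := hTbij.2 (u - B (dp, 0))
      refine ⟨(dp, dz), ?_⟩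
      show (dp, B (dp, dz)) = (dp, u)
      rw [hBsplit ⟨dp, dz⟩, hdz]
      simp
  -- upgrade F' to a continuous linear equivalence
  set F'e : ((E × E) × E) ≃L[ℝ] ((E × E) × (E →L[ℝ] ℝ)) :=
    ContinuousLinearEquiv.ofBijective F'
      (LinearMap.ker_eq_bot.2 hF'bij.1) (LinearMap.range_eq_top.2 hF'bij.2) with hF'e
  have hF'ecoe : (F'e : ((E × E) × E) →L[ℝ] ((E × E) × (E →L[ℝ] ℝ))) = F' :=
    ContinuousLinearEquiv.coe_ofBijective _ _ _
  have hFat : ContDiffAt ℝ 1 F x₀ := hFC.contDiffAt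
  have hF'at : HasFDerivAt F (F'e : ((E × E) × E) →L[ℝ] ((E × E) × (E →L[ℝ] ℝ))) x₀ := by
    rw [hF'ecoe]; exact hF'
  have hstrict : HasStrictFDerivAt F
      (F'e : ((E × E) × E) →L[ℝ] ((E × E) × (E →L[ℝ] ℝ))) x₀ :=
    hFat.hasStrictFDerivAt' hF'at (by norm_num)
  set g : (E × E) × (E →L[ℝ] ℝ) → (E × E) × E := hstrict.localInverse F F'e x₀ with hg
  have hgC : ContDiffAt ℝ 1 g (F x₀) := hFat.to_localInverse hF'at (by norm_num)
  have hleft : ∀ᶠ x in nhds x₀, g (F x) = x := hstrict.eventually_left_inverse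
  have hright : ∀ᶠ y in nhds (F x₀), F (g y) = y := hstrict.eventually_right_inverse
  -- choose neighborhoods
  obtain ⟨W, hWn, hgW⟩ := hgC.contDiffOn le_rfl (by simp)
  obtain ⟨W', hW'sub, hW'open, hW'mem⟩ := mem_nhds_iff.1 hWn
  have hTn : {y | F (g y) = y ∧ y ∈ W'} ∈ nhds (F x₀) :=
    hright.and (hW'open.mem_nhds hW'mem)
  obtain ⟨Tset, hTsub, hTopen, hTmem⟩ := mem_nhds_iff.1 hTn
  obtain ⟨S, hSsub, hSopen, hSmem⟩ := mem_nhds_iff.1 hleft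
  obtain ⟨U₁, V, hU₁open, hVopen, hU₁mem, hVmem, hUVsub⟩ :=
    isOpen_prod_iff.1 hSopen (q₀', q₁') q₂' hSmem
  -- define the implicit function
  set φ : E × E → (E × E) × E := fun p => g (p, 0) with hφdef
  set f : E × E → E := fun p => (φ p).2 with hfdef
  set O : Set (E × E) := (fun p : E × E => ((p, (0 : E →L[ℝ] ℝ)) : (E × E) × (E →L[ℝ] ℝ))) ⁻¹' Tset
    with hOdef
  have hOopen : IsOpen O := hTopen.preimage (continuous_id.prodMk continuous_const)
  have hTW : Tset ⊆ W := fun y hy => hW'sub (hTsub hy).2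
  have hφcont : ContinuousOn φ O := by
    refine (hgW.continuousOn).comp ((continuous_id.prodMk continuous_const).continuousOn) ?_
    intro p hp
    exact hTW hp
  set U : Set (E × E) := U₁ ∩ (O ∩ φ ⁻¹' (U₁ ×ˢ V)) with hUdef
  have hUopen : IsOpen U :=
    hU₁open.inter (hφcont.isOpen_inter_preimage hOopen (hU₁open.prod hVopen))
  -- basic facts for points of U
  have hFmem : ((q₀', q₁'), (0 : E →L[ℝ] ℝ)) ∈ Tset := by rw [← hFx₀]; exact hTmem
  have hφpt : φ (q₀', q₁') = x₀ := by
    show g ((q₀', q₁'), 0) = x₀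
    rw [← hFx₀]
    exact hSsub hSmem
  have hptU : (q₀', q₁') ∈ U := by
    refine ⟨hU₁mem, hFmem, ?_⟩
    show φ (q₀', q₁') ∈ U₁ ×ˢ V
    rw [hφpt]
    exact ⟨hU₁mem, hVmem⟩
  have hfpt : f (q₀', q₁') = q₂' := by
    show (φ (q₀', q₁')).2 = q₂'
    rw [hφpt]
  -- smoothness of f on U
  have hfC : ContDiffOn ℝ 1 f U := by
    have h1 : ContDiffOn ℝ 1 φ U := by
      refine hgW.comp ((contDiff_id.prodMk contDiff_const).contDiffOn) ?_
      intro p hp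
      exact hTW hp.2.1
    exact contDiff_snd.comp_contDiffOn h1
  -- key: for p ∈ U, φ p = (p, f p) and Φ (p, f p) = 0
  have hkey : ∀ p ∈ U, φ p = (p, f p) ∧ Φ (p, f p) = 0 := by
    intro p hp
    have hF1 : F (φ p) = (p, 0) := (hTsub hp.2.1).1
    have h1 : (φ p).1 = p := congrArg Prod.fst hF1
    have hpair : φ p = (p, f p) := by
      rw [hfdef]
      exact Prod.ext h1 rfl
    refine ⟨hpair, ?_⟩
    have h2 : Φ (φ p) = 0 := congrArg Prod.snd hF1
    rwa [hpair] at h2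
  -- translation between Φ and the fderiv statement
  have htrans : ∀ (p : E × E) (z : E),
      fderiv ℝ (fun x => L (x, z)) p.2 + fderiv ℝ (fun y => L (p.1, y)) p.2 = Φ (p, z) := by
    intro p z
    have e1 : fderiv ℝ (fun x => L (x, z)) p.2 = c₁ (D (p.2, z)) := by
      rw [hc₁app]; exact (hpart1 p.2 z).fderiv
    have e2 : fderiv ℝ (fun y => L (p.1, y)) p.2 = c₂ (D (p.1, p.2)) := by
      rw [hc₂app]; exact (hpart2 p.1 p.2).fderiv
    rw [e1, e2]
  refine ⟨U, V, f, hUopen, hVopen, hptU, hVmem, hfC, hfpt, ?_⟩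
  intro p hp
  obtain ⟨hpair, hzero⟩ := hkey p hp
  have hfpV : f p ∈ V := by
    have : φ p ∈ U₁ ×ˢ V := hp.2.2
    rw [hpair] at this
    exact this.2
  refine ⟨hfpV, ?_, ?_⟩
  · rw [htrans p (f p)]
    exact hzero
  · intro z hz heq
    rw [htrans p z] at heq
    have hFz : F (p, z) = (p, 0) := by
      show ((p, z).1, Φ (p, z)) = (p, 0)
      rw [heq]
    have hmemS : ((p, z) : (E × E) × E) ∈ S := hUVsub ⟨hp.1, hz⟩
    have h1 : g (F (p, z)) = (p, z) := hSsub hmemS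
    rw [hFz] at h1
    have h2 : φ p = (p, z) := h1
    rw [hpair] at h2
    exact (congrArg Prod.snd h2).symm
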